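/- Let F ∈ {2,3,4,5,6}, let S be a positive integer, and let d = gcd(F,S). Then the maximum K for which a (K, F, F−2, S)-PDA exists equals ((F−1)·(S−1) + d − 1)/2; i.e., K_{(F,2,S)} = (F−1)(S−1)/2 + (d−1)/2. -/

import Mathlib

/-- A `(K, F, Z, S)` placement delivery array: an `F × K` array over
`{0, …, S-1} ∪ {*}` (with `none` playing the role of `*`) such that
(1) each integer occurs at most once in each row and in each column,
(2) whenever two distinct cells `(a, b)` and `(c, d)` contain the same
integer, the opposite corners `(a, d)` and `(c, b)` contain `*`, and
(3) the symbol `*` occurs exactly `Z` times in each column. -/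
def IsPDA (K F Z S : ℕ) (P : Fin F → Fin K → Option (Fin S)) : Prop :=
  (∀ (i : Fin F) (j j' : Fin K) (s : Fin S), P i j = some s → P i j' = some s → j = j') ∧
  (∀ (i i' : Fin F) (j : Fin K) (s : Fin S), P i j = some s → P i' j = some s → i = i') ∧
  (∀ (a c : Fin F) (b d : Fin K) (s : Fin S),
      (a, b) ≠ (c, d) → P a b = some s → P c d = some s →
      P a d = none ∧ P c b = none) ∧
  (∀ j : Fin K, (Finset.univ.filter (fun i => P i j = none)).card = Z)

/-- There exists a `(K, F, Z, S)` placement delivery array. -/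
def PDAExists (K F Z S : ℕ) : Prop :=
  ∃ P : Fin F → Fin K → Option (Fin S), IsPDA K F Z S P

lemma pda_zero (F Z S : ℕ) : PDAExists 0 F Z S :=
  ⟨fun _ j => j.elim0, fun _ j => j.elim0, fun _ _ j => j.elim0, fun _ _ j => j.elim0,
   fun j => j.elim0⟩

lemma fin_castAdd_val {S1 S2 : ℕ} (a : Fin S1) : (Fin.castAdd S2 a : ℕ) = a := rfl
lemma fin_natAdd_val {S1 S2 : ℕ} (a : Fin S2) : (Fin.natAdd S1 a : ℕ) = S1 + a := rfl

lemma pda_concat {F Z K1 K2 S1 S2 : ℕ} (h1 : PDAExists K1 F Z S1) (h2 : PDAExists K2 F Z S2) :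
    PDAExists (K1 + K2) F Z (S1 + S2) := by
  obtain ⟨P1, h11, h12, h13, h14⟩ := h1
  obtain ⟨P2, h21, h22, h23, h24⟩ := h2
  refine ⟨fun i j =>
    if h : (j : ℕ) < K1 then (P1 i ⟨j, h⟩).map (Fin.castAdd S2)
    else (P2 i ⟨(j : ℕ) - K1, by have := j.isLt; omega⟩).map (Fin.natAdd S1), ?_, ?_, ?_, ?_⟩
  · intro i j j' s hj hj'
    dsimp only at hj hj'
    by_cases h : (j : ℕ) < K1 <;> by_cases h' : (j' : ℕ) < K1
    · rw [dif_pos h, Option.map_eq_some_iff] at hj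
      rw [dif_pos h', Option.map_eq_some_iff] at hj'
      obtain ⟨a, ha, rfl⟩ := hj
      obtain ⟨a', ha', hv⟩ := hj'
      have hv2 := congrArg Fin.val hv
      rw [fin_castAdd_val, fin_castAdd_val] at hv2
      have : a' = a := Fin.ext hv2
      subst this
      exact Fin.ext (Fin.mk_eq_mk.mp (h11 _ _ _ _ ha ha'))
    · rw [dif_pos h, Option.map_eq_some_iff] at hj
      rw [dif_neg h', Option.map_eq_some_iff] at hj'
      obtain ⟨a, ha, rfl⟩ := hj
      obtain ⟨a', ha', hv⟩ := hj'
      have hv2 := congrArg Fin.val hv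
      rw [fin_natAdd_val, fin_castAdd_val] at hv2
      have := a.isLt; omega
    · rw [dif_neg h, Option.map_eq_some_iff] at hj
      rw [dif_pos h', Option.map_eq_some_iff] at hj'
      obtain ⟨a, ha, rfl⟩ := hj
      obtain ⟨a', ha', hv⟩ := hj'
      have hv2 := congrArg Fin.val hv
      rw [fin_natAdd_val, fin_castAdd_val] at hv2
      have := a'.isLt; omega
    · rw [dif_neg h, Option.map_eq_some_iff] at hj
      rw [dif_neg h', Option.map_eq_some_iff] at hj'
      obtain ⟨a, ha, rfl⟩ := hj
      obtain ⟨a', ha', hv⟩ := hj'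
      have hv2 := congrArg Fin.val hv
      rw [fin_natAdd_val, fin_natAdd_val] at hv2
      have : a' = a := Fin.ext (by omega)
      subst this
      have := Fin.mk_eq_mk.mp (h21 _ _ _ _ ha ha')
      have hj2 := j.isLt; have hj2' := j'.isLt
      exact Fin.ext (by omega)
  · intro i i' j s hj hj'
    dsimp only at hj hj'
    by_cases h : (j : ℕ) < K1
    · rw [dif_pos h, Option.map_eq_some_iff] at hj hj'
      obtain ⟨a, ha, rfl⟩ := hj
      obtain ⟨a', ha', hv⟩ := hj'
      have hv2 := congrArg Fin.val hv
      rw [fin_castAdd_val, fin_castAdd_val] at hv2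
      have : a' = a := Fin.ext hv2
      subst this
      exact h12 _ _ _ _ ha ha'
    · rw [dif_neg h, Option.map_eq_some_iff] at hj hj'
      obtain ⟨a, ha, rfl⟩ := hj
      obtain ⟨a', ha', hv⟩ := hj'
      have hv2 := congrArg Fin.val hv
      rw [fin_natAdd_val, fin_natAdd_val] at hv2
      have : a' = a := Fin.ext (by omega)
      subst this
      exact h22 _ _ _ _ ha ha'
  · intro a c b d s hne hab hcd
    dsimp only at hab hcd ⊢
    by_cases h : (b : ℕ) < K1 <;> by_cases h' : (d : ℕ) < K1
    · rw [dif_pos h, Option.map_eq_some_iff] at hab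
      rw [dif_pos h', Option.map_eq_some_iff] at hcd
      obtain ⟨x, hx, rfl⟩ := hab
      obtain ⟨y, hy, hv⟩ := hcd
      have hv2 := congrArg Fin.val hv
      rw [fin_castAdd_val, fin_castAdd_val] at hv2
      have : y = x := Fin.ext hv2
      subst this
      have hne2 : (a, (⟨(b : ℕ), h⟩ : Fin K1)) ≠ (c, ⟨(d : ℕ), h'⟩) := by
        intro hcon
        apply hne
        rw [Prod.mk.injEq] at hcon ⊢
        exact ⟨hcon.1, Fin.ext (Fin.mk_eq_mk.mp hcon.2)⟩
      obtain ⟨w1, w2⟩ := h13 _ _ _ _ _ hne2 hx hy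
      rw [dif_pos h', dif_pos h]
      constructor <;> rw [Option.map_eq_none_iff]
      · exact w1
      · exact w2
    · rw [dif_pos h, Option.map_eq_some_iff] at hab
      rw [dif_neg h', Option.map_eq_some_iff] at hcd
      obtain ⟨x, hx, rfl⟩ := hab
      obtain ⟨y, hy, hv⟩ := hcd
      have hv2 := congrArg Fin.val hv
      rw [fin_natAdd_val, fin_castAdd_val] at hv2
      have := x.isLt; omega
    · rw [dif_neg h, Option.map_eq_some_iff] at hab
      rw [dif_pos h', Option.map_eq_some_iff] at hcd
      obtain ⟨x, hx, rfl⟩ := hab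
      obtain ⟨y, hy, hv⟩ := hcd
      have hv2 := congrArg Fin.val hv
      rw [fin_natAdd_val, fin_castAdd_val] at hv2
      have := y.isLt; omega
    · rw [dif_neg h, Option.map_eq_some_iff] at hab
      rw [dif_neg h', Option.map_eq_some_iff] at hcd
      obtain ⟨x, hx, rfl⟩ := hab
      obtain ⟨y, hy, hv⟩ := hcd
      have hv2 := congrArg Fin.val hv
      rw [fin_natAdd_val, fin_natAdd_val] at hv2
      have : y = x := Fin.ext (by omega)
      subst this
      have hb := b.isLt; have hd := d.isLt
      have hne2 : (a, (⟨(b : ℕ) - K1, by omega⟩ : Fin K2)) ≠ (c, ⟨(d : ℕ) - K1, by omega⟩) := by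
        intro hcon
        apply hne
        rw [Prod.mk.injEq] at hcon ⊢
        obtain ⟨hc1, hc2⟩ := hcon
        have hbd2 : (b : ℕ) - K1 = (d : ℕ) - K1 := Fin.mk_eq_mk.mp hc2
        exact ⟨hc1, Fin.ext (by omega)⟩
      obtain ⟨w1, w2⟩ := h23 _ _ _ _ _ hne2 hx hy
      rw [dif_neg h', dif_neg h]
      constructor <;> rw [Option.map_eq_none_iff]
      · exact w1
      · exact w2
  · intro j
    dsimp only
    by_cases h : (j : ℕ) < K1
    · have : ∀ i, ((if h : (j : ℕ) < K1 then (P1 i ⟨j, h⟩).map (Fin.castAdd S2)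
          else (P2 i ⟨(j : ℕ) - K1, by have := j.isLt; omega⟩).map (Fin.natAdd S1)) = none)
          ↔ P1 i ⟨j, h⟩ = none := by
        intro i
        rw [dif_pos h, Option.map_eq_none_iff]
      rw [Finset.filter_congr (fun i _ => this i)]
      exact h14 _
    · have : ∀ i, ((if h : (j : ℕ) < K1 then (P1 i ⟨j, h⟩).map (Fin.castAdd S2)
          else (P2 i ⟨(j : ℕ) - K1, by have := j.isLt; omega⟩).map (Fin.natAdd S1)) = none)
          ↔ P2 i ⟨(j : ℕ) - K1, by have := j.isLt; omega⟩ = none := by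
        intro i
        rw [dif_neg h, Option.map_eq_none_iff]
      rw [Finset.filter_congr (fun i _ => this i)]
      exact h24 _

lemma pda_rounds {F Z KR SR K0 S0 : ℕ} (hR : PDAExists KR F Z SR) (h0 : PDAExists K0 F Z S0) :
    ∀ q, PDAExists (q * KR + K0) F Z (q * SR + S0) := by
  intro q
  induction q with
  | zero => simpa using h0
  | succ q ih =>
    have h := pda_concat hR ih
    have e1 : KR + (q * KR + K0) = (q + 1) * KR + K0 := by ring
    have e2 : SR + (q * SR + S0) = (q + 1) * SR + S0 := by ring
    rwa [e1, e2] at h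

set_option maxHeartbeats 2000000 in
lemma hR2 : PDAExists 1 2 0 2 :=
  ⟨!![some 1; some 0], by unfold IsPDA; simp only [Matrix.of_apply]; refine ⟨?_, ?_, ?_, ?_⟩ <;> decide⟩
set_option maxHeartbeats 2000000 in
lemma hR3 : PDAExists 3 3 1 3 :=
  ⟨!![some 1, some 2, none; some 0, none, some 2; none, some 0, some 1], by unfold IsPDA; simp only [Matrix.of_apply]; refine ⟨?_, ?_, ?_, ?_⟩ <;> decide⟩
set_option maxHeartbeats 2000000 in
lemma hR4 : PDAExists 6 4 2 4 :=
  ⟨!![some 1, some 2, some 3, none, none, none; some 0, none, none, some 2, some 3, none; none, some 0, none, some 1, none, some 3; none, none, some 0, none, some 1, some 2], by unfold IsPDA; simp only [Matrix.of_apply]; refine ⟨?_, ?_, ?_, ?_⟩ <;> decide⟩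
set_option maxHeartbeats 2000000 in
lemma hR5 : PDAExists 10 5 3 5 :=
  ⟨!![some 1, some 2, some 3, some 4, none, none, none, none, none, none; some 0, none, none, none, some 2, some 3, some 4, none, none, none; none, some 0, none, none, some 1, none, none, some 3, some 4, none; none, none, some 0, none, none, some 1, none, some 2, none, some 4; none, none, none, some 0, none, none, some 1, none, some 2, some 3], by unfold IsPDA; simp only [Matrix.of_apply]; refine ⟨?_, ?_, ?_, ?_⟩ <;> decide⟩
set_option maxHeartbeats 2000000 in
lemma hR6 : PDAExists 15 6 4 6 :=
  ⟨!![some 1, some 2, some 3, some 4, some 5, none, none, none, none, none, none, none, none, none, none; some 0, none, none, none, none, some 2, some 3, some 4, some 5, none, none, none, none, none, none; none, some 0, none, none, none, some 1, none, none, none, some 3, some 4, some 5, none, none, none; none, none, some 0, none, none, none, some 1, none, none, some 2, none, none, some 4, some 5, none; none, none, none, some 0, none, none, none, some 1, none, none, some 2, none, some 3, none, some 5; none, none, none, none, some 0, none, none, none, some 1, none, none, some 2, none, some 3, some 4], by unfold IsPDA; simp only [Matrix.of_apply]; refine ⟨?_, ?_, ?_, ?_⟩ <;> decide⟩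
set_option maxHeartbeats 2000000 in
lemma hB3_2 : PDAExists 1 3 1 2 :=
  ⟨!![some 0; some 1; none], by unfold IsPDA; simp only [Matrix.of_apply]; refine ⟨?_, ?_, ?_, ?_⟩ <;> decide⟩
set_option maxHeartbeats 2000000 in
lemma hB4_2 : PDAExists 2 4 2 2 :=
  ⟨!![some 0, none; some 1, none; none, some 0; none, some 1], by unfold IsPDA; simp only [Matrix.of_apply]; refine ⟨?_, ?_, ?_, ?_⟩ <;> decide⟩
set_option maxHeartbeats 2000000 in
lemma hB4_3 : PDAExists 3 4 2 3 :=
  ⟨!![some 0, some 2, none; some 1, none, some 2; none, some 1, some 0; none, none, none], by unfold IsPDA; simp only [Matrix.of_apply]; refine ⟨?_, ?_, ?_, ?_⟩ <;> decide⟩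
set_option maxHeartbeats 2000000 in
lemma hB5_2 : PDAExists 2 5 3 2 :=
  ⟨!![some 0, none; some 1, none; none, some 0; none, some 1; none, none], by unfold IsPDA; simp only [Matrix.of_apply]; refine ⟨?_, ?_, ?_, ?_⟩ <;> decide⟩
set_option maxHeartbeats 2000000 in
lemma hB5_3 : PDAExists 4 5 3 3 :=
  ⟨!![some 0, some 2, none, none; some 1, none, some 2, none; none, some 1, some 0, none; none, none, none, some 0; none, none, none, some 1], by unfold IsPDA; simp only [Matrix.of_apply]; refine ⟨?_, ?_, ?_, ?_⟩ <;> decide⟩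
set_option maxHeartbeats 2000000 in
lemma hB5_4 : PDAExists 6 5 3 4 :=
  ⟨!![some 0, some 2, some 3, none, none, none; some 1, none, none, some 2, some 3, none; none, some 1, none, some 0, none, some 3; none, none, some 1, none, some 0, some 2; none, none, none, none, none, none], by unfold IsPDA; simp only [Matrix.of_apply]; refine ⟨?_, ?_, ?_, ?_⟩ <;> decide⟩
set_option maxHeartbeats 2000000 in
lemma hB6_2 : PDAExists 3 6 4 2 :=
  ⟨!![some 0, none, none; some 1, none, none; none, some 0, none; none, some 1, none; none, none, some 0; none, none, some 1], by unfold IsPDA; simp only [Matrix.of_apply]; refine ⟨?_, ?_, ?_, ?_⟩ <;> decide⟩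
set_option maxHeartbeats 2000000 in
lemma hB6_3 : PDAExists 6 6 4 3 :=
  ⟨!![some 0, some 2, none, none, none, none; some 1, none, some 2, none, none, none; none, some 1, some 0, none, none, none; none, none, none, some 0, some 2, none; none, none, none, some 1, none, some 2; none, none, none, none, some 1, some 0], by unfold IsPDA; simp only [Matrix.of_apply]; refine ⟨?_, ?_, ?_, ?_⟩ <;> decide⟩
set_option maxHeartbeats 2000000 in
lemma hB6_4 : PDAExists 8 6 4 4 :=
  ⟨!![some 0, some 2, none, none, none, none, none, none; some 1, some 3, none, none, none, none, none, none; none, none, some 0, some 2, some 3, none, none, none; none, none, some 1, none, none, some 2, some 3, none; none, none, none, some 1, none, some 0, none, some 3; none, none, none, none, some 1, none, some 0, some 2], by unfold IsPDA; simp only [Matrix.of_apply]; refine ⟨?_, ?_, ?_, ?_⟩ <;> decide⟩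
set_option maxHeartbeats 2000000 in
lemma hB6_5 : PDAExists 10 6 4 5 :=
  ⟨!![some 0, some 2, some 3, some 4, none, none, none, none, none, none; some 1, none, none, none, some 2, some 3, some 4, none, none, none; none, some 1, none, none, some 0, none, none, some 3, some 4, none; none, none, some 1, none, none, some 0, none, some 2, none, some 4; none, none, none, some 1, none, none, some 0, none, some 2, some 3; none, none, none, none, none, none, none, none, none, none], by unfold IsPDA; simp only [Matrix.of_apply]; refine ⟨?_, ?_, ?_, ?_⟩ <;> decide⟩

open Finset in
lemma pda_upper {F S K : ℕ} (hF : 2 ≤ F) (h : PDAExists K F (F - 2) S) :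
    ∃ e u : ℕ, 2 * K + e = S * (F - 1) ∧ u ≤ e ∧
      (S % F ≠ 0 → S % F ≤ u ∧ F ≤ u + e) ∧ (F = 6 → S % 6 = 1 → e ≠ 3) := by
  classical
  obtain ⟨P, hP1, hP2, hP3, hP4⟩ := h
  -- exactly two non-star cells in each column
  have hcard2 : ∀ j, (univ.filter fun i => ¬ P i j = none).card = 2 := by
    intro j
    have h4 := hP4 j
    have hsplit := Finset.card_filter_add_card_filter_not
      (s := (univ : Finset (Fin F))) (p := fun i => P i j = none)
    have hctot : (univ : Finset (Fin F)).card = F := by simp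
    omega
  have hother : ∀ (j : Fin K) (v : Fin F), P v j ≠ none →
      ∃ w, w ≠ v ∧ P w j ≠ none ∧ ∀ i, P i j ≠ none → i = v ∨ i = w := by
    intro j v hv
    obtain ⟨a, b, hab, hfil⟩ := Finset.card_eq_two.mp (hcard2 j)
    have hmem : ∀ i : Fin F, P i j ≠ none ↔ (i = a ∨ i = b) := by
      intro i
      constructor
      · intro hi
        have : i ∈ univ.filter fun i => ¬ P i j = none := by
          simp [Finset.mem_filter, hi]
        rw [hfil] at this
        simpa using this
      · intro hi
        have : i ∈ univ.filter fun i => ¬ P i j = none := by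
          rw [hfil]; simpa using hi
        simp [Finset.mem_filter] at this
        exact this
    rcases (hmem v).mp hv with hva | hvb
    · subst hva
      exact ⟨b, fun hc => hab hc.symm, (hmem b).mpr (Or.inr rfl),
        fun i hi => (hmem i).mp hi⟩
    · subst hvb
      exact ⟨a, fun hc => hab hc, (hmem a).mpr (Or.inl rfl),
        fun i hi => ((hmem i).mp hi).symm⟩
  -- main counting quantities
  set m : Fin S → ℕ :=
    fun t => ∑ v : Fin F, if (∃ j, P v j = some t) then 1 else 0 with hm
  set cnt : Fin F → Fin S → ℕ :=
    fun v t => ∑ j : Fin K, if (P v j ≠ none ∧ ∃ i, i ≠ v ∧ P i j = some t) then 1 else 0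
      with hcnt
  set nn : Fin F → ℕ :=
    fun v => ∑ t : Fin S, if (¬ (∃ j, P v j = some t) ∧ m t = F - 1) then 1 else 0 with hnn
  set z : Fin F → ℕ :=
    fun v => ∑ t : Fin S, if (¬ (∃ j, P v j = some t) ∧ m t ≠ F - 1) then 1 else 0 with hz
  set II : Fin F → ℕ :=
    fun v => ∑ t : Fin S, if m t ≠ F - 1 then cnt v t else 0 with hII
  set u : ℕ := ∑ t : Fin S, if m t ≠ F - 1 then 1 else 0 with hu
  set e : ℕ := ∑ t : Fin S, if m t ≠ F - 1 then F - 1 - m t else 0 with he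
  -- leaf lemmas
  have LA : ∀ (v : Fin F) (t : Fin S),
      (∑ j : Fin K, if P v j = some t then 1 else 0) =
        if (∃ j, P v j = some t) then 1 else 0 := by
    intro v t
    by_cases hocc : ∃ j, P v j = some t
    · obtain ⟨j0, hj0⟩ := hocc
      rw [if_pos ⟨j0, hj0⟩]
      rw [Finset.sum_eq_single_of_mem j0 (mem_univ j0)
        (fun j _ hne => if_neg (fun hc => hne (hP1 v j j0 t hc hj0)))]
      exact if_pos hj0
    · rw [if_neg hocc]
      exact Finset.sum_eq_zero fun j _ => if_neg (fun hc => hocc ⟨j, hc⟩)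
  have LB : ∀ (j : Fin K) (t : Fin S),
      (∑ i : Fin F, if P i j = some t then 1 else 0) =
        if (∃ i, P i j = some t) then 1 else 0 := by
    intro j t
    by_cases hocc : ∃ i, P i j = some t
    · obtain ⟨i0, hi0⟩ := hocc
      rw [if_pos ⟨i0, hi0⟩]
      rw [Finset.sum_eq_single_of_mem i0 (mem_univ i0)
        (fun i _ hne => if_neg (fun hc => hne (hP2 i i0 j t hc hi0)))]
      exact if_pos hi0
    · rw [if_neg hocc]
      exact Finset.sum_eq_zero fun i _ => if_neg (fun hc => hocc ⟨i, hc⟩)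
  have LG : ∀ (v : Fin F) (j : Fin K),
      (∑ t : Fin S, if P v j = some t then 1 else 0) =
        if P v j ≠ none then 1 else 0 := by
    intro v j
    by_cases hvj : P v j = none
    · rw [if_neg (by simp [hvj])]
      exact Finset.sum_eq_zero fun t _ => if_neg (by simp [hvj])
    · obtain ⟨s0, hs0⟩ := Option.ne_none_iff_exists'.mp hvj
      rw [if_pos hvj]
      rw [Finset.sum_eq_single_of_mem s0 (mem_univ s0)
        (fun t _ hne => if_neg (fun hc => hne (by rw [hs0] at hc; exact (Option.some.inj hc).symm)))]
      exact if_pos hs0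
  have L0 : ∀ j : Fin K, (∑ i : Fin F, if P i j ≠ none then 1 else 0) = 2 := by
    intro j
    rw [← hcard2 j, Finset.card_filter]
  -- LE : occurrence kills cnt
  have LE : ∀ (v : Fin F) (t : Fin S), (∃ j, P v j = some t) → cnt v t = 0 := by
    intro v t ⟨j', hvj'⟩
    rw [hcnt]
    refine Finset.sum_eq_zero fun j _ => if_neg ?_
    rintro ⟨hvn, i, hiv, hit⟩
    have hne : (i, j) ≠ (v, j') := fun hc => hiv (congrArg Prod.fst hc)
    exact hvn (hP3 i v j j' t hne hit hvj').2
  -- LD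
  have LD : ∀ (j : Fin K) (t : Fin S),
      (∑ v : Fin F, if (P v j ≠ none ∧ ∃ i, i ≠ v ∧ P i j = some t) then 1 else 0) =
        if (∃ i, P i j = some t) then 1 else 0 := by
    intro j t
    by_cases hex : ∃ i, P i j = some t
    · obtain ⟨i0, hi0⟩ := hex
      obtain ⟨w, hwi, hwn, hall⟩ := hother j i0 (show P i0 j ≠ none by simp [hi0])
      rw [if_pos ⟨i0, hi0⟩]
      rw [Finset.sum_eq_single_of_mem w (mem_univ w) ?_]
      · exact if_pos ⟨hwn, i0, fun hc => hwi hc.symm, hi0⟩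
      · intro v _ hvw
        refine if_neg ?_
        rintro ⟨hvn, i, hiv, hit⟩
        have hii0 : i = i0 := hP2 i i0 j t hit hi0
        subst hii0
        rcases hall v hvn with hv0 | hvw'
        · exact hiv hv0.symm
        · exact hvw hvw'
    · rw [if_neg hex]
      refine Finset.sum_eq_zero fun v _ => if_neg ?_
      rintro ⟨_, i, _, hit⟩
      exact hex ⟨i, hit⟩
  -- LH
  have LH : ∀ (v : Fin F) (j : Fin K),
      (∑ t : Fin S, if (P v j ≠ none ∧ ∃ i, i ≠ v ∧ P i j = some t) then 1 else 0) =
        if P v j ≠ none then 1 else 0 := by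
    intro v j
    by_cases hn : P v j = none
    · rw [if_neg (by simp [hn])]
      exact Finset.sum_eq_zero fun t _ => if_neg (fun hc => hc.1 hn)
    · rw [if_pos hn]
      obtain ⟨w, hwv, hwn, hall⟩ := hother j v hn
      cases hw : P w j with
      | none => exact absurd hw hwn
      | some t0 =>
        rw [Finset.sum_eq_single_of_mem t0 (mem_univ t0) ?_]
        · exact if_pos ⟨hn, w, hwv, hw⟩
        · intro t _ hne
          refine if_neg ?_
          rintro ⟨_, i, hiv, hit⟩
          rcases hall i (show P i j ≠ none by simp [hit]) with hi | hi
          · exact hiv hi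
          · subst hi
            rw [hw] at hit
            exact hne ((Option.some.inj hit).symm)
  -- per-vertex degree identities
  have hdeg1 : ∀ v : Fin F,
      (∑ t : Fin S, if (∃ j, P v j = some t) then 1 else 0) =
        (∑ j : Fin K, if P v j ≠ none then 1 else 0) := by
    intro v
    calc (∑ t : Fin S, if (∃ j, P v j = some t) then 1 else 0)
        = ∑ t : Fin S, ∑ j : Fin K, if P v j = some t then 1 else 0 :=
          Finset.sum_congr rfl fun t _ => (LA v t).symm
      _ = ∑ j : Fin K, ∑ t : Fin S, if P v j = some t then 1 else 0 := Finset.sum_comm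
      _ = ∑ j : Fin K, if P v j ≠ none then 1 else 0 :=
          Finset.sum_congr rfl fun j _ => LG v j
  have hS3 : ∀ t : Fin S, (∑ v : Fin F, cnt v t) = m t := by
    intro t
    calc (∑ v : Fin F, cnt v t)
        = ∑ v : Fin F, ∑ j : Fin K,
            if (P v j ≠ none ∧ ∃ i, i ≠ v ∧ P i j = some t) then 1 else 0 := rfl
      _ = ∑ j : Fin K, ∑ v : Fin F,
            if (P v j ≠ none ∧ ∃ i, i ≠ v ∧ P i j = some t) then 1 else 0 := Finset.sum_comm
      _ = ∑ j : Fin K, if (∃ i, P i j = some t) then 1 else 0 :=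
          Finset.sum_congr rfl fun j _ => LD j t
      _ = ∑ j : Fin K, ∑ i : Fin F, if P i j = some t then 1 else 0 :=
          Finset.sum_congr rfl fun j _ => (LB j t).symm
      _ = ∑ i : Fin F, ∑ j : Fin K, if P i j = some t then 1 else 0 := Finset.sum_comm
      _ = ∑ i : Fin F, if (∃ j, P i j = some t) then 1 else 0 :=
          Finset.sum_congr rfl fun i _ => LA i t
      _ = m t := rfl
  have hdeg2 : ∀ v : Fin F,
      (∑ j : Fin K, if P v j ≠ none then 1 else 0) = ∑ t : Fin S, cnt v t := by
    intro v
    calc (∑ j : Fin K, if P v j ≠ none then 1 else 0)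
        = ∑ j : Fin K, ∑ t : Fin S,
            if (P v j ≠ none ∧ ∃ i, i ≠ v ∧ P i j = some t) then 1 else 0 :=
          Finset.sum_congr rfl fun j _ => (LH v j).symm
      _ = ∑ t : Fin S, ∑ j : Fin K,
            if (P v j ≠ none ∧ ∃ i, i ≠ v ∧ P i j = some t) then 1 else 0 := Finset.sum_comm
      _ = ∑ t : Fin S, cnt v t := rfl
  -- counts of non-occurring rows
  have hnocc : ∀ t : Fin S,
      (∑ v : Fin F, if ¬ (∃ j, P v j = some t) then 1 else 0) = F - m t := by
    intro t
    have hpt : ∀ v : Fin F,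
        (if (∃ j, P v j = some t) then 1 else 0) +
          (if ¬ (∃ j, P v j = some t) then 1 else 0) = 1 := by
      intro v
      by_cases hc : ∃ j, P v j = some t <;> simp [hc]
    have hsum : m t + (∑ v : Fin F, if ¬ (∃ j, P v j = some t) then 1 else 0) = F := by
      rw [hm, ← Finset.sum_add_distrib]
      rw [Finset.sum_congr rfl fun v _ => hpt v]
      simp [Finset.card_univ]
    omega
  have hm_leF : ∀ t, m t ≤ F := by
    intro t
    rw [hm]
    calc (∑ v : Fin F, if (∃ j, P v j = some t) then 1 else 0) ≤ ∑ _v : Fin F, 1 :=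
      Finset.sum_le_sum fun v _ => by by_cases hc : ∃ j, P v j = some t <;> simp [hc]
    _ = F := by simp
  have hm_le : ∀ t, m t ≤ F - 1 := by
    intro t
    have hle := hm_leF t
    rcases Nat.lt_or_ge (m t) F with hlt | hge
    · omega
    · exfalso
      have hmF : m t = F := by omega
      have hocc_all : ∀ v : Fin F, ∃ j, P v j = some t := by
        have h0 : (∑ v : Fin F, if ¬ (∃ j, P v j = some t) then 1 else 0) = 0 := by
          rw [hnocc t]; omega
        intro v
        by_contra hno
        have h1 := Finset.single_le_sum (f := fun w : Fin F =>
          if ¬ (∃ j, P w j = some t) then 1 else 0) (fun _ _ => Nat.zero_le _) (mem_univ v)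
        have h2 : (if ¬ (∃ j, P v j = some t) then 1 else 0 : ℕ) ≤
            ∑ w : Fin F, if ¬ (∃ j, P w j = some t) then 1 else 0 := h1
        rw [if_pos hno] at h2
        omega
      have : (∑ v : Fin F, cnt v t) = 0 :=
        Finset.sum_eq_zero fun v _ => LE v t (hocc_all v)
      rw [hS3 t] at this
      omega
  -- full values: cnt is F-1 at the unique missing row
  have hfull : ∀ (t : Fin S), m t = F - 1 → ∀ (v : Fin F), ¬ (∃ j, P v j = some t) →
      cnt v t = F - 1 := by
    intro t hmt v hnocc_v
    have hcard1 : (∑ w : Fin F, if ¬ (∃ j, P w j = some t) then 1 else 0) = 1 := by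
      rw [hnocc t]; omega
    have huniq : ∀ w : Fin F, w ≠ v → ∃ j, P w j = some t := by
      intro w hwv
      by_contra hno
      have h2le : 2 ≤ ∑ w : Fin F, if ¬ (∃ j, P w j = some t) then 1 else 0 := by
        have hsub : ({v, w} : Finset (Fin F)) ⊆ univ := fun x _ => mem_univ x
        have h1 := Finset.sum_le_sum_of_subset (f := fun w : Fin F =>
          if ¬ (∃ j, P w j = some t) then 1 else 0) hsub
        have h2 : (∑ x ∈ ({v, w} : Finset (Fin F)),
            if ¬ (∃ j, P x j = some t) then 1 else 0 : ℕ) ≤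
            ∑ x : Fin F, if ¬ (∃ j, P x j = some t) then 1 else 0 := h1
        rw [Finset.sum_pair (fun hc => hwv hc.symm), if_pos hnocc_v, if_pos hno] at h2
        omega
      omega
    have := hS3 t
    rw [Finset.sum_eq_single_of_mem v (mem_univ v)
      (fun w _ hwv => LE w t (huniq w hwv))] at this
    omega
  -- cnt bounded by m
  have hcnt_le : ∀ (v : Fin F) (t : Fin S), cnt v t ≤ m t := by
    intro v t
    rw [hcnt]
    calc (∑ j : Fin K, if (P v j ≠ none ∧ ∃ i, i ≠ v ∧ P i j = some t) then 1 else 0)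
        ≤ ∑ j : Fin K, if (∃ i, P i j = some t) then 1 else 0 := by
          refine Finset.sum_le_sum fun j _ => ?_
          by_cases hc : P v j ≠ none ∧ ∃ i, i ≠ v ∧ P i j = some t
          · obtain ⟨-, i, -, hit⟩ := id hc
            rw [if_pos hc, if_pos ⟨i, hit⟩]
          · rw [if_neg hc]; exact Nat.zero_le _
      _ = ∑ j : Fin K, ∑ i : Fin F, if P i j = some t then 1 else 0 :=
          (Finset.sum_congr rfl fun j _ => (LB j t).symm)
      _ = ∑ i : Fin F, ∑ j : Fin K, if P i j = some t then 1 else 0 := Finset.sum_comm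
      _ = m t := by
          rw [hm]
          exact Finset.sum_congr rfl fun i _ => LA i t
  -- per-vertex master identity
  have hmaster : ∀ v : Fin F, nn v * F + (z v + II v) = S := by
    intro v
    have hpart : (∑ t : Fin S, if (∃ j, P v j = some t) then 1 else 0) + (nn v + z v) = S := by
      rw [hnn, hz, ← Finset.sum_add_distrib, ← Finset.sum_add_distrib]
      have hpt : ∀ t : Fin S,
          ((if (∃ j, P v j = some t) then 1 else 0) +
            ((if (¬ (∃ j, P v j = some t) ∧ m t = F - 1) then 1 else 0) +
             (if (¬ (∃ j, P v j = some t) ∧ m t ≠ F - 1) then 1 else 0))) = 1 := by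
        intro t
        by_cases h1 : ∃ j, P v j = some t
        · simp [h1]
        · by_cases h2 : m t = F - 1 <;> simp [h1, h2]
      rw [Finset.sum_congr rfl fun t _ => hpt t]
      simp [Finset.card_univ]
    have hfsum : (∑ t : Fin S, if m t = F - 1 then cnt v t else 0) = nn v * (F - 1) := by
      rw [hnn, Finset.sum_mul]
      refine Finset.sum_congr rfl fun t _ => ?_
      by_cases h2 : m t = F - 1
      · by_cases h1 : ∃ j, P v j = some t
        · rw [if_pos h2, LE v t h1, if_neg (fun hc => hc.1 h1), zero_mul]
        · rw [if_pos h2, hfull t h2 v h1, if_pos ⟨h1, h2⟩, one_mul]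
      · rw [if_neg h2, if_neg (fun hc => h2 hc.2), zero_mul]
    have hsplitc : (∑ t : Fin S, cnt v t) =
        (∑ t : Fin S, if m t = F - 1 then cnt v t else 0) + II v := by
      rw [hII, ← Finset.sum_add_distrib]
      refine Finset.sum_congr rfl fun t _ => ?_
      by_cases h2 : m t = F - 1 <;> simp [h2]
    have hdeg : (∑ t : Fin S, if (∃ j, P v j = some t) then 1 else 0) =
        nn v * (F - 1) + II v := by
      rw [hdeg1 v, hdeg2 v, hsplitc, hfsum]
    rw [hdeg] at hpart
    have hmul : nn v * (F - 1) + nn v = nn v * F := by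
      have h1 : F - 1 + 1 = F := Nat.sub_add_cancel (le_trans one_le_two hF)
      calc nn v * (F - 1) + nn v = nn v * (F - 1 + 1) := by ring
      _ = nn v * F := by rw [h1]
    -- hpart : nn v * (F-1) + II v + (nn v + z v) = S
    have := hmul
    omega
  -- II bounded
  have hII_le : ∀ v : Fin F, II v ≤ z v * (F - 2) := by
    intro v
    rw [hII, hz, Finset.sum_mul]
    refine Finset.sum_le_sum fun t _ => ?_
    by_cases h2 : m t = F - 1
    · rw [if_neg (by simpa using h2)]
      exact Nat.zero_le _
    · rw [if_pos h2]
      by_cases h1 : ∃ j, P v j = some t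
      · rw [LE v t h1, if_neg (fun hc => hc.1 h1)]
        exact Nat.zero_le _
      · rw [if_pos ⟨h1, h2⟩, one_mul]
        have := hcnt_le v t
        have := hm_le t
        omega
  -- column sums
  have hzsum' : (∑ v : Fin F, z v) =
      ∑ t : Fin S, if m t ≠ F - 1 then F - m t else 0 := by
    rw [hz]
    rw [Finset.sum_comm]
    refine Finset.sum_congr rfl fun t _ => ?_
    by_cases h2 : m t = F - 1
    · rw [if_neg (by simpa using h2)]
      exact Finset.sum_eq_zero fun v _ => if_neg (fun hc => hc.2 h2)
    · rw [if_pos h2, ← hnocc t]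
      exact Finset.sum_congr rfl fun v _ => by
        by_cases h1 : ∃ j, P v j = some t <;> simp [h1, h2]
  have hIIsum : (∑ v : Fin F, II v) =
      ∑ t : Fin S, if m t ≠ F - 1 then m t else 0 := by
    rw [hII]
    rw [Finset.sum_comm]
    refine Finset.sum_congr rfl fun t _ => ?_
    by_cases h2 : m t = F - 1
    · rw [if_neg (by simpa using h2)]
      exact Finset.sum_eq_zero fun v _ => if_neg (by simpa using h2)
    · rw [if_pos h2]
      calc (∑ v : Fin F, if m t ≠ F - 1 then cnt v t else 0)
          = ∑ v : Fin F, cnt v t := Finset.sum_congr rfl fun v _ => if_pos h2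
        _ = m t := hS3 t
  have hsum_zI : (∑ v : Fin F, z v) + (∑ v : Fin F, II v) = u * F := by
    rw [hzsum', hIIsum, hu, Finset.sum_mul, ← Finset.sum_add_distrib]
    refine Finset.sum_congr rfl fun t _ => ?_
    by_cases h2 : m t = F - 1
    · simp [h2]
    · have := hm_le t
      rw [if_pos h2, if_pos h2, if_pos h2, one_mul]
      omega
  have hzsum : (∑ v : Fin F, z v) = e + u := by
    rw [hzsum', he, hu, ← Finset.sum_add_distrib]
    refine Finset.sum_congr rfl fun t _ => ?_
    by_cases h2 : m t = F - 1
    · simp [h2]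
    · have := hm_le t
      rw [if_pos h2, if_pos h2, if_pos h2]
      omega
  have he_ge_u : u ≤ e := by
    rw [hu, he]
    refine Finset.sum_le_sum fun t _ => ?_
    by_cases h2 : m t = F - 1
    · simp [h2]
    · have := hm_le t
      rw [if_pos h2, if_pos h2]
      omega
  -- total count
  have h2K : (∑ t : Fin S, m t) = 2 * K := by
    calc (∑ t : Fin S, m t)
        = ∑ t : Fin S, ∑ v : Fin F, if (∃ j, P v j = some t) then 1 else 0 := rfl
      _ = ∑ v : Fin F, ∑ t : Fin S, if (∃ j, P v j = some t) then 1 else 0 := Finset.sum_comm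
      _ = ∑ v : Fin F, ∑ j : Fin K, if P v j ≠ none then 1 else 0 :=
          Finset.sum_congr rfl fun v _ => hdeg1 v
      _ = ∑ j : Fin K, ∑ v : Fin F, if P v j ≠ none then 1 else 0 := Finset.sum_comm
      _ = ∑ _j : Fin K, 2 := Finset.sum_congr rfl fun j _ => L0 j
      _ = 2 * K := by simp [Finset.card_univ, Nat.mul_comm]
  have hKe : 2 * K + e = S * (F - 1) := by
    rw [← h2K, he, ← Finset.sum_add_distrib]
    have : (∑ t : Fin S, (m t + if m t ≠ F - 1 then F - 1 - m t else 0)) =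
        ∑ _t : Fin S, (F - 1) := by
      refine Finset.sum_congr rfl fun t _ => ?_
      have := hm_le t
      by_cases h2 : m t = F - 1
      · simp [h2]
      · rw [if_pos h2]
        omega
    rw [this]
    simp [Finset.card_univ, Nat.mul_comm]
  -- modular facts
  have hmod : ∀ v : Fin F, (z v + II v) % F = S % F := by
    intro v
    have h1 : (nn v * F + (z v + II v)) % F = (z v + II v) % F := by
      rw [Nat.add_comm, Nat.add_mul_mod_self_right]
    conv_rhs => rw [← hmaster v]
    exact h1.symm
  refine ⟨e, u, hKe, he_ge_u, ?_, ?_⟩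
  · intro hr
    have hge : ∀ v : Fin F, S % F ≤ z v + II v := by
      intro v
      calc S % F = (z v + II v) % F := (hmod v).symm
      _ ≤ z v + II v := Nat.mod_le _ _
    have hsumv : (∑ v : Fin F, (z v + II v)) = u * F := by
      rw [Finset.sum_add_distrib, hsum_zI]
    have hFSle : F * (S % F) ≤ u * F := by
      rw [← hsumv]
      calc F * (S % F) = ∑ _v : Fin F, S % F := by simp [Finset.card_univ, Nat.mul_comm]
      _ ≤ ∑ v : Fin F, (z v + II v) := Finset.sum_le_sum fun v _ => hge v
    have hu_ge : S % F ≤ u := by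
      have : F * (S % F) ≤ F * u := by
        calc F * (S % F) ≤ u * F := hFSle
        _ = F * u := Nat.mul_comm _ _
      exact Nat.le_of_mul_le_mul_left this (by omega)
    have hz1 : ∀ v : Fin F, 1 ≤ z v := by
      intro v
      by_contra hno
      have hz0 : z v = 0 := by omega
      have hI0 : II v = 0 := by
        have := hII_le v
        rw [hz0] at this
        omega
      have := hmod v
      rw [hz0, hI0] at this
      simp at this
      exact hr this.symm
    have hFle : F ≤ u + e := by
      have : (∑ _v : Fin F, 1) ≤ ∑ v : Fin F, z v := Finset.sum_le_sum fun v _ => hz1 v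
      rw [hzsum] at this
      simp [Finset.card_univ] at this
      omega
    exact ⟨hu_ge, hFle⟩
  · intro hF6 h61 he3
    subst hF6
    have hr : S % 6 ≠ 0 := by omega
    -- reprove needed pieces (u ≥ 1, z ≥ 1, F ≤ u + e)
    have hz1 : ∀ v : Fin 6, 1 ≤ z v := by
      intro v
      by_contra hno
      have hz0 : z v = 0 := by omega
      have hI0 : II v = 0 := by
        have := hII_le v
        rw [hz0] at this
        omega
      have := hmod v
      rw [hz0, hI0] at this
      simp at this
      exact hr this.symm
    have hFle : (6 : ℕ) ≤ u + e := by
      have h1 : (∑ _v : Fin 6, 1) ≤ ∑ v : Fin 6, z v := Finset.sum_le_sum fun v _ => hz1 v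
      rw [hzsum] at h1
      simp [Finset.card_univ] at h1
      omega
    have hu3 : u = 3 := by omega
    have hzsum6 : (∑ v : Fin 6, z v) = 6 := by rw [hzsum]; omega
    have hz_all1 : ∀ v : Fin 6, z v = 1 := by
      intro v
      have hsplit := Finset.add_sum_erase univ z (mem_univ v)
      have herase : (5 : ℕ) ≤ ∑ w ∈ univ.erase v, z w := by
        calc (5 : ℕ) = ∑ _w ∈ univ.erase v, 1 := by
              rw [Finset.sum_const, Finset.card_erase_of_mem (mem_univ v)]
              simp [Finset.card_univ]
        _ ≤ ∑ w ∈ univ.erase v, z w :=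
              Finset.sum_le_sum fun w _ => hz1 w
      have h1 := hz1 v
      omega
    have hI0 : ∀ v : Fin 6, II v = 0 := by
      intro v
      have h1 := hmod v
      rw [hz_all1 v, h61] at h1
      have h2 := hII_le v
      rw [hz_all1 v] at h2
      omega
    have hIsum0 : (∑ v : Fin 6, II v) = 0 :=
      Finset.sum_eq_zero fun v _ => hI0 v
    have := hsum_zI
    rw [hzsum6, hIsum0, hu3] at this
    omega

theorem pda_optimal_small_F (F S : ℕ) (hF : F ∈ ({2, 3, 4, 5, 6} : Finset ℕ)) (hS : 0 < S)
    (d : ℕ) (hd : d = Nat.gcd F S) :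
    IsGreatest {K : ℕ | PDAExists K F (F - 2) S} (((F - 1) * (S - 1) + d - 1) / 2) := by
  have hgcd : d = Nat.gcd (S % F) F := by rw [hd, Nat.gcd_rec]
  fin_cases hF
  · -- F = 2
    have h6 : S % 2 = 0 ∨ S % 2 = 1 := by omega
    constructor
    · show PDAExists (((2 - 1) * (S - 1) + d - 1) / 2) 2 0 S
      rcases h6 with h | h
      · have hd' : d = 2 := by rw [hgcd, h]; decide
        have hex := pda_rounds hR2 (pda_zero 2 0 0) (S / 2)
        have hSS : S / 2 * 2 + 0 = S := by omega
        have hex2 := (congrArg (fun X => PDAExists (S / 2 * 1 + 0) 2 0 X) hSS).mp hex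
        have hKK : ((2 - 1) * (S - 1) + d - 1) / 2 = S / 2 * 1 + 0 := by omega
        rw [hKK]
        exact hex2
      · have hd' : d = 1 := by rw [hgcd, h]; decide
        have hex := pda_rounds hR2 (pda_zero 2 0 1) (S / 2)
        have hSS : S / 2 * 2 + 1 = S := by omega
        have hex2 := (congrArg (fun X => PDAExists (S / 2 * 1 + 0) 2 0 X) hSS).mp hex
        have hKK : ((2 - 1) * (S - 1) + d - 1) / 2 = S / 2 * 1 + 0 := by omega
        rw [hKK]
        exact hex2
    · intro K hK
      obtain ⟨e, u, h1, h2, h3, h4⟩ := pda_upper (by norm_num) hK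
      rcases h6 with h | h
      · have hd' : d = 2 := by rw [hgcd, h]; decide
        omega
      · have hd' : d = 1 := by rw [hgcd, h]; decide
        have h3' := h3 (by omega)
        omega
  · -- F = 3
    have h6 : S % 3 = 0 ∨ S % 3 = 1 ∨ S % 3 = 2 := by omega
    constructor
    · show PDAExists (((3 - 1) * (S - 1) + d - 1) / 2) 3 1 S
      rcases h6 with h | h | h
      · have hd' : d = 3 := by rw [hgcd, h]; decide
        have hex := pda_rounds hR3 (pda_zero 3 1 0) (S / 3)
        have hSS : S / 3 * 3 + 0 = S := by omega
        have hex2 := (congrArg (fun X => PDAExists (S / 3 * 3 + 0) 3 1 X) hSS).mp hex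
        have hKK : ((3 - 1) * (S - 1) + d - 1) / 2 = S / 3 * 3 + 0 := by omega
        rw [hKK]
        exact hex2
      · have hd' : d = 1 := by rw [hgcd, h]; decide
        have hex := pda_rounds hR3 (pda_zero 3 1 1) (S / 3)
        have hSS : S / 3 * 3 + 1 = S := by omega
        have hex2 := (congrArg (fun X => PDAExists (S / 3 * 3 + 0) 3 1 X) hSS).mp hex
        have hKK : ((3 - 1) * (S - 1) + d - 1) / 2 = S / 3 * 3 + 0 := by omega
        rw [hKK]
        exact hex2
      · have hd' : d = 1 := by rw [hgcd, h]; decide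
        have hex := pda_rounds hR3 hB3_2 (S / 3)
        have hSS : S / 3 * 3 + 2 = S := by omega
        have hex2 := (congrArg (fun X => PDAExists (S / 3 * 3 + 1) 3 1 X) hSS).mp hex
        have hKK : ((3 - 1) * (S - 1) + d - 1) / 2 = S / 3 * 3 + 1 := by omega
        rw [hKK]
        exact hex2
    · intro K hK
      obtain ⟨e, u, h1, h2, h3, h4⟩ := pda_upper (by norm_num) hK
      rcases h6 with h | h | h
      · have hd' : d = 3 := by rw [hgcd, h]; decide
        omega
      · have hd' : d = 1 := by rw [hgcd, h]; decide
        have h3' := h3 (by omega)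
        omega
      · have hd' : d = 1 := by rw [hgcd, h]; decide
        have h3' := h3 (by omega)
        omega
  · -- F = 4
    have h6 : S % 4 = 0 ∨ S % 4 = 1 ∨ S % 4 = 2 ∨ S % 4 = 3 := by omega
    constructor
    · show PDAExists (((4 - 1) * (S - 1) + d - 1) / 2) 4 2 S
      rcases h6 with h | h | h | h
      · have hd' : d = 4 := by rw [hgcd, h]; decide
        have hex := pda_rounds hR4 (pda_zero 4 2 0) (S / 4)
        have hSS : S / 4 * 4 + 0 = S := by omega
        have hex2 := (congrArg (fun X => PDAExists (S / 4 * 6 + 0) 4 2 X) hSS).mp hex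
        have hKK : ((4 - 1) * (S - 1) + d - 1) / 2 = S / 4 * 6 + 0 := by omega
        rw [hKK]
        exact hex2
      · have hd' : d = 1 := by rw [hgcd, h]; decide
        have hex := pda_rounds hR4 (pda_zero 4 2 1) (S / 4)
        have hSS : S / 4 * 4 + 1 = S := by omega
        have hex2 := (congrArg (fun X => PDAExists (S / 4 * 6 + 0) 4 2 X) hSS).mp hex
        have hKK : ((4 - 1) * (S - 1) + d - 1) / 2 = S / 4 * 6 + 0 := by omega
        rw [hKK]
        exact hex2
      · have hd' : d = 2 := by rw [hgcd, h]; decide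
        have hex := pda_rounds hR4 hB4_2 (S / 4)
        have hSS : S / 4 * 4 + 2 = S := by omega
        have hex2 := (congrArg (fun X => PDAExists (S / 4 * 6 + 2) 4 2 X) hSS).mp hex
        have hKK : ((4 - 1) * (S - 1) + d - 1) / 2 = S / 4 * 6 + 2 := by omega
        rw [hKK]
        exact hex2
      · have hd' : d = 1 := by rw [hgcd, h]; decide
        have hex := pda_rounds hR4 hB4_3 (S / 4)
        have hSS : S / 4 * 4 + 3 = S := by omega
        have hex2 := (congrArg (fun X => PDAExists (S / 4 * 6 + 3) 4 2 X) hSS).mp hex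
        have hKK : ((4 - 1) * (S - 1) + d - 1) / 2 = S / 4 * 6 + 3 := by omega
        rw [hKK]
        exact hex2
    · intro K hK
      obtain ⟨e, u, h1, h2, h3, h4⟩ := pda_upper (by norm_num) hK
      rcases h6 with h | h | h | h
      · have hd' : d = 4 := by rw [hgcd, h]; decide
        omega
      · have hd' : d = 1 := by rw [hgcd, h]; decide
        have h3' := h3 (by omega)
        omega
      · have hd' : d = 2 := by rw [hgcd, h]; decide
        have h3' := h3 (by omega)
        omega
      · have hd' : d = 1 := by rw [hgcd, h]; decide
        have h3' := h3 (by omega)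
        omega
  · -- F = 5
    have h6 : S % 5 = 0 ∨ S % 5 = 1 ∨ S % 5 = 2 ∨ S % 5 = 3 ∨ S % 5 = 4 := by omega
    constructor
    · show PDAExists (((5 - 1) * (S - 1) + d - 1) / 2) 5 3 S
      rcases h6 with h | h | h | h | h
      · have hd' : d = 5 := by rw [hgcd, h]; decide
        have hex := pda_rounds hR5 (pda_zero 5 3 0) (S / 5)
        have hSS : S / 5 * 5 + 0 = S := by omega
        have hex2 := (congrArg (fun X => PDAExists (S / 5 * 10 + 0) 5 3 X) hSS).mp hex
        have hKK : ((5 - 1) * (S - 1) + d - 1) / 2 = S / 5 * 10 + 0 := by omega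
        rw [hKK]
        exact hex2
      · have hd' : d = 1 := by rw [hgcd, h]; decide
        have hex := pda_rounds hR5 (pda_zero 5 3 1) (S / 5)
        have hSS : S / 5 * 5 + 1 = S := by omega
        have hex2 := (congrArg (fun X => PDAExists (S / 5 * 10 + 0) 5 3 X) hSS).mp hex
        have hKK : ((5 - 1) * (S - 1) + d - 1) / 2 = S / 5 * 10 + 0 := by omega
        rw [hKK]
        exact hex2
      · have hd' : d = 1 := by rw [hgcd, h]; decide
        have hex := pda_rounds hR5 hB5_2 (S / 5)
        have hSS : S / 5 * 5 + 2 = S := by omega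
        have hex2 := (congrArg (fun X => PDAExists (S / 5 * 10 + 2) 5 3 X) hSS).mp hex
        have hKK : ((5 - 1) * (S - 1) + d - 1) / 2 = S / 5 * 10 + 2 := by omega
        rw [hKK]
        exact hex2
      · have hd' : d = 1 := by rw [hgcd, h]; decide
        have hex := pda_rounds hR5 hB5_3 (S / 5)
        have hSS : S / 5 * 5 + 3 = S := by omega
        have hex2 := (congrArg (fun X => PDAExists (S / 5 * 10 + 4) 5 3 X) hSS).mp hex
        have hKK : ((5 - 1) * (S - 1) + d - 1) / 2 = S / 5 * 10 + 4 := by omega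
        rw [hKK]
        exact hex2
      · have hd' : d = 1 := by rw [hgcd, h]; decide
        have hex := pda_rounds hR5 hB5_4 (S / 5)
        have hSS : S / 5 * 5 + 4 = S := by omega
        have hex2 := (congrArg (fun X => PDAExists (S / 5 * 10 + 6) 5 3 X) hSS).mp hex
        have hKK : ((5 - 1) * (S - 1) + d - 1) / 2 = S / 5 * 10 + 6 := by omega
        rw [hKK]
        exact hex2
    · intro K hK
      obtain ⟨e, u, h1, h2, h3, h4⟩ := pda_upper (by norm_num) hK
      rcases h6 with h | h | h | h | h
      · have hd' : d = 5 := by rw [hgcd, h]; decide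
        omega
      · have hd' : d = 1 := by rw [hgcd, h]; decide
        have h3' := h3 (by omega)
        omega
      · have hd' : d = 1 := by rw [hgcd, h]; decide
        have h3' := h3 (by omega)
        omega
      · have hd' : d = 1 := by rw [hgcd, h]; decide
        have h3' := h3 (by omega)
        omega
      · have hd' : d = 1 := by rw [hgcd, h]; decide
        have h3' := h3 (by omega)
        omega
  · -- F = 6
    have h6 : S % 6 = 0 ∨ S % 6 = 1 ∨ S % 6 = 2 ∨ S % 6 = 3 ∨ S % 6 = 4 ∨ S % 6 = 5 := by omega
    constructor
    · show PDAExists (((6 - 1) * (S - 1) + d - 1) / 2) 6 4 S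
      rcases h6 with h | h | h | h | h | h
      · have hd' : d = 6 := by rw [hgcd, h]; decide
        have hex := pda_rounds hR6 (pda_zero 6 4 0) (S / 6)
        have hSS : S / 6 * 6 + 0 = S := by omega
        have hex2 := (congrArg (fun X => PDAExists (S / 6 * 15 + 0) 6 4 X) hSS).mp hex
        have hKK : ((6 - 1) * (S - 1) + d - 1) / 2 = S / 6 * 15 + 0 := by omega
        rw [hKK]
        exact hex2
      · have hd' : d = 1 := by rw [hgcd, h]; decide
        have hex := pda_rounds hR6 (pda_zero 6 4 1) (S / 6)
        have hSS : S / 6 * 6 + 1 = S := by omega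
        have hex2 := (congrArg (fun X => PDAExists (S / 6 * 15 + 0) 6 4 X) hSS).mp hex
        have hKK : ((6 - 1) * (S - 1) + d - 1) / 2 = S / 6 * 15 + 0 := by omega
        rw [hKK]
        exact hex2
      · have hd' : d = 2 := by rw [hgcd, h]; decide
        have hex := pda_rounds hR6 hB6_2 (S / 6)
        have hSS : S / 6 * 6 + 2 = S := by omega
        have hex2 := (congrArg (fun X => PDAExists (S / 6 * 15 + 3) 6 4 X) hSS).mp hex
        have hKK : ((6 - 1) * (S - 1) + d - 1) / 2 = S / 6 * 15 + 3 := by omega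
        rw [hKK]
        exact hex2
      · have hd' : d = 3 := by rw [hgcd, h]; decide
        have hex := pda_rounds hR6 hB6_3 (S / 6)
        have hSS : S / 6 * 6 + 3 = S := by omega
        have hex2 := (congrArg (fun X => PDAExists (S / 6 * 15 + 6) 6 4 X) hSS).mp hex
        have hKK : ((6 - 1) * (S - 1) + d - 1) / 2 = S / 6 * 15 + 6 := by omega
        rw [hKK]
        exact hex2
      · have hd' : d = 2 := by rw [hgcd, h]; decide
        have hex := pda_rounds hR6 hB6_4 (S / 6)
        have hSS : S / 6 * 6 + 4 = S := by omega
        have hex2 := (congrArg (fun X => PDAExists (S / 6 * 15 + 8) 6 4 X) hSS).mp hex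
        have hKK : ((6 - 1) * (S - 1) + d - 1) / 2 = S / 6 * 15 + 8 := by omega
        rw [hKK]
        exact hex2
      · have hd' : d = 1 := by rw [hgcd, h]; decide
        have hex := pda_rounds hR6 hB6_5 (S / 6)
        have hSS : S / 6 * 6 + 5 = S := by omega
        have hex2 := (congrArg (fun X => PDAExists (S / 6 * 15 + 10) 6 4 X) hSS).mp hex
        have hKK : ((6 - 1) * (S - 1) + d - 1) / 2 = S / 6 * 15 + 10 := by omega
        rw [hKK]
        exact hex2
    · intro K hK
      obtain ⟨e, u, h1, h2, h3, h4⟩ := pda_upper (by norm_num) hK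
      rcases h6 with h | h | h | h | h | h
      · have hd' : d = 6 := by rw [hgcd, h]; decide
        omega
      · have hd' : d = 1 := by rw [hgcd, h]; decide
        have h3' := h3 (by omega)
        have h4' := h4 rfl h
        omega
      · have hd' : d = 2 := by rw [hgcd, h]; decide
        have h3' := h3 (by omega)
        omega
      · have hd' : d = 3 := by rw [hgcd, h]; decide
        have h3' := h3 (by omega)
        omega
      · have hd' : d = 2 := by rw [hgcd, h]; decide
        have h3' := h3 (by omega)
        omega
      · have hd' : d = 1 := by rw [hgcd, h]; decide
        have h3' := h3 (by omega)
        omega
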